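/- Fix integers n ≥ 2 and l ≥ 0. For all α, γ ∈ B^{(n)}_l, the identity K^{(n,l)}(z)^γ_α = z^{α₁−γ₁} K^{(n,l)}(z)^{σ(γ)}_{σ(α)} holds in F((t)), where σ(α) = (α₂, …, α_n, α₁) denotes the cyclic shift (note z^{α₁−γ₁} = t^{γ₁−α₁}). -/

import Mathlib

open scoped Classical

noncomputable section

namespace KOY

/-- `F = ℚ(q)`, the field of rational functions in an indeterminate `q` over `ℚ`. -/
abbrev Fq : Type := RatFunc ℚ

/-- The indeterminate `q`. -/
def q : Fq := RatFunc.X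

/-- `[u] = (q^u - q^{-u})/(q - q⁻¹)`. -/
def qint (u : ℤ) : Fq := (q ^ u - q ^ (-u)) / (q - q⁻¹)

/-- `(z; a)_m = ∏_{k=0}^{m-1} (1 - z a^k)`. -/
def poch {R : Type*} [CommRing R] (z a : R) (m : ℕ) : R :=
  ∏ k ∈ Finset.range m, (1 - z * a ^ k)

/-- The `q`-boson Fock space `⊕_{m ≥ 0} F·|m⟩`. -/
abbrev Fock : Type := ℕ →₀ Fq

/-- creation operator `a⁺ |m⟩ = |m+1⟩`. -/
def aP : Module.End Fq Fock := Finsupp.lift Fock Fq ℕ fun m => Finsupp.single (m + 1) 1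

/-- annihilation operator `a⁻ |m⟩ = (1-q^m)|m-1⟩`. -/
def aM : Module.End Fq Fock :=
  Finsupp.lift Fock Fq ℕ fun m => (1 - q ^ m) • Finsupp.single (m - 1) 1

/-- `k |m⟩ = q^m |m⟩`. -/
def kO : Module.End Fq Fock := Finsupp.lift Fock Fq ℕ fun m => q ^ m • Finsupp.single m 1

/-- The operator `G^j_i` for `i, j ≥ 0` (`i` = lower index, `j` = upper index):
`G^j_i = (-q;q)_{i+j} Σ_{m=0}^{t} ((q^{-t};q)_m (-q^{-t};q)_m / ((q;q)_m (-q^{-s};q)_m))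
  (a⁺)^{(j-i)_+} (q^m k^m) (a⁻)^{(i-j)_+}` with `s = i+j`, `t = min i j`. -/
def GopN (i j : ℕ) : Module.End Fq Fock :=
  poch (-q) q (i + j) •
    ∑ m ∈ Finset.range (min i j + 1),
      (poch (q ^ (-(min i j : ℤ))) q m * poch (-q ^ (-(min i j : ℤ))) q m /
          (poch q q m * poch (-q ^ (-((i : ℤ) + j))) q m)) •
        (aP ^ (j - i) * (q ^ m • kO ^ m) * aM ^ (i - j))

/-- `G^j_i` with the convention that it vanishes for negative indices. -/
def Gop (i j : ℤ) : Module.End Fq Fock :=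
  if 0 ≤ i ∧ 0 ≤ j then GopN i.toNat j.toNat else 0

/-- `X_{mm}`: the coefficient of `|m⟩` in `X |m⟩`. -/
def elem (X : Module.End Fq Fock) (m : ℕ) : Fq := X (Finsupp.single m 1) m

/-- `⟨a, b⟩ = ∑_{i<j} a_i b_j` (natural numbers). -/
def innN {n : ℕ} (a b : Fin n → ℕ) : ℕ := ∑ i, ∑ j, if i < j then a i * b j else 0

/-- `⟨a, b⟩ = ∑_{i<j} a_i b_j` (integers). -/
def innZ {n : ℕ} (a b : Fin n → ℤ) : ℤ := ∑ i, ∑ j, if i < j then a i * b j else 0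

/-- `|a| = ∑ a_i`. -/
def asum {k : ℕ} (a : Fin k → ℤ) : ℤ := ∑ i, a i

/-- coercion of arrays to integer arrays. -/
def castZ {n : ℕ} (a : Fin n → ℕ) : Fin n → ℤ := fun i => (a i : ℤ)

/-- The matrix product formula for `K^{(n,l)}(z)^γ_α` as a power series in `t = z⁻¹`:
`q^{⟨γ,α⟩} (q^{-l}t;q)_{l+1} ((q²;q²)_l (-qt;q)_l)⁻¹ Σ_{m≥0} q^{-lm} t^m (G^{γ₁}_{α₁}⋯G^{γₙ}_{αₙ})_{mm}`,
with coefficients transported along a ring hom `f` from `ℚ(q)`. -/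
def KmatPS {K : Type*} [Field K] (f : Fq →+* K) (n l : ℕ) (α γ : Fin n → ℕ) :
    PowerSeries K :=
  PowerSeries.C (R := K) (f (q ^ innN γ α)) *
    poch (PowerSeries.C (R := K) (f (q ^ (-(l : ℤ)))) * PowerSeries.X) (PowerSeries.C (R := K) (f q)) (l + 1) *
    (PowerSeries.C (R := K) (f (poch (q ^ 2) (q ^ 2) l)) *
        poch (PowerSeries.C (R := K) (f (-q)) * PowerSeries.X) (PowerSeries.C (R := K) (f q)) l)⁻¹ *
    PowerSeries.mk fun m =>
      f (q ^ (-(l * m : ℤ)) * elem (List.ofFn fun i => Gop (α i) (γ i)).prod m)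

/-- `F((t))`, the field of formal Laurent series in `t`. -/
abbrev LS : Type := LaurentSeries Fq

/-- `K^{(n,l)}(z)^γ_α ∈ F((t))` (first array = lower index `α`, second = upper index `γ`). -/
def Kmat (n l : ℕ) (α γ : Fin n → ℕ) : LS :=
  HahnSeries.ofPowerSeries ℤ Fq (KmatPS (RingHom.id Fq) n l α γ)

/-- Extension of `Kmat` to integer arrays, vanishing if some entry is negative. -/
def KmatZ (n l : ℕ) (α γ : Fin n → ℤ) : LS :=
  if (∀ i, 0 ≤ α i) ∧ ∀ i, 0 ≤ γ i then
    Kmat n l (fun i => (α i).toNat) fun i => (γ i).toNat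
  else 0

/-- `t ∈ F((t))`. -/
def T : LS := HahnSeries.single (1 : ℤ) (1 : Fq)

/-- the constant embedding `F → F((t))`. -/
def CL : Fq →+* LS := HahnSeries.C

/-- `Φ̄_q(γ|β; λ, μ)` for integer arrays, vanishing unless `0 ≤ γ ≤ β`. -/
def phiBarP {K : Type*} [Field K] (qv lam mu : K) {k : ℕ} (γ β : Fin k → ℤ) : K :=
  if ∀ i, 0 ≤ γ i ∧ γ i ≤ β i then
    poch lam qv (asum γ).toNat * poch (mu / lam) qv (asum β - asum γ).toNat /
        poch mu qv (asum β).toNat *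
      ∏ i, poch qv qv (β i).toNat / (poch qv qv (β i - γ i).toNat * poch qv qv (γ i).toNat)
  else 0

/-- `Φ_q(γ|β; λ, μ) = q^{⟨β-γ,γ⟩} (μ/λ)^{|γ|} Φ̄_q(γ|β; λ, μ)`. -/
def phiP {K : Type*} [Field K] (qv lam mu : K) {k : ℕ} (γ β : Fin k → ℤ) : K :=
  qv ^ innZ (β - γ) γ * (mu / lam) ^ asum γ * phiBarP qv lam mu γ β

/-- truncation `ᾱ = (α₁, …, α_{n-1})` (as an integer array). -/
def bar {n : ℕ} (a : Fin n → ℕ) : Fin (n - 1) → ℤ :=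
  fun i => (a ⟨i.val, by have := i.isLt; omega⟩ : ℤ)

/-- `A^{(l,m)}(z)^{γ,δ}_{α,β}
  = q^{⟨α,β⟩-⟨δ,γ⟩} Σ_{ξ̄+η̄=γ̄+δ̄} Φ_{q²}(ξ̄-δ̄|ξ̄; q^{m-l}z, q^{-l-m}z) Φ_{q²}(η̄|β̄; q^{-l-m}z⁻¹, q^{-2m})`
in any field, for chosen values of `q` and `z`. -/
def Amat {K : Type*} [Field K] (qv zv : K) {n : ℕ} (l m : ℕ) (γ δ α β : Fin n → ℕ) : K :=
  qv ^ ((innN α β : ℤ) - (innN δ γ : ℤ)) *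
    ∑ ξ ∈ Finset.Icc (0 : Fin (n - 1) → ℤ) (bar γ + bar δ),
      phiP (qv ^ 2) (qv ^ ((m : ℤ) - l) * zv) (qv ^ (-(l : ℤ) - m) * zv) (ξ - bar δ) ξ *
        phiP (qv ^ 2) (qv ^ (-(l : ℤ) - m) * zv⁻¹) (qv ^ (-(2 * m : ℤ))) (bar γ + bar δ - ξ)
          (bar β)

/-- `𝒮(λ,μ)^{γ,δ}_{α,β} = θ(γ+δ=α+β) q^{⟨β-γ,γ⟩+⟨α,β-γ⟩+|α||β|-|γ||δ|} λ^{2(|δ|-|α|)}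
  Φ̄_{q²}(α|δ; λ², μ²)`, the parametric `R` matrix element. -/
def Smat {K : Type*} [Field K] (qv lam mu : K) {k : ℕ} (γ δ α β : Fin k → ℕ) : K :=
  if γ + δ = α + β then
    qv ^ (innZ (castZ β - castZ γ) (castZ γ) + innZ (castZ α) (castZ β - castZ γ) +
          (asum (castZ α) * asum (castZ β) - asum (castZ γ) * asum (castZ δ))) *
      lam ^ (2 * (asum (castZ δ) - asum (castZ α))) *
      phiBarP (qv ^ 2) (lam ^ 2) (mu ^ 2) (castZ α) (castZ δ)
  else 0

/-- reversal `ρ(a) = (a_n, …, a_1)`. -/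
def rev {n : ℕ} {M : Type*} (a : Fin n → M) : Fin n → M := fun i => a i.rev

/-- cyclic shift `σ(a) = (a_2, …, a_n, a_1)`. -/
def cyc {n : ℕ} {M : Type*} (a : Fin n → M) : Fin n → M :=
  fun i => a ⟨(i.val + 1) % n, Nat.mod_lt _ (by have := i.isLt; omega)⟩

/-- the cyclic successor on `Fin n`. -/
def nxt {n : ℕ} (i : Fin n) : Fin n :=
  ⟨(i.val + 1) % n, Nat.mod_lt _ (by have := i.isLt; omega)⟩

/-- deletion of the `i`-th entry of an array. -/
def del {n : ℕ} (i : Fin n) (a : Fin n → ℕ) : Fin (n - 1) → ℕ :=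
  fun j =>
    if (j : ℕ) < (i : ℕ) then a ⟨j, by have := j.isLt; omega⟩
    else a ⟨(j : ℕ) + 1, by have := j.isLt; omega⟩

/-- the `q²`-binomial coefficient `binom(b, c)_{q²}` as an element of `ℚ(q)`. -/
def qbinom2 (b c : ℕ) : Fq :=
  poch (q ^ 2) (q ^ 2) b / (poch (q ^ 2) (q ^ 2) (b - c) * poch (q ^ 2) (q ^ 2) c)

/-- `ℚ(q)(z) = ℚ(q, z)`. -/
abbrev Fqz : Type := RatFunc Fq

/-- the image of `q` in `ℚ(q, z)`. -/
def qz : Fqz := RatFunc.C q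

/-- the indeterminate `z` in `ℚ(q, z)`. -/
def zz : Fqz := RatFunc.X

lemma aP_single (m : ℕ) : aP (Finsupp.single m 1) = Finsupp.single (m+1) (1:Fq) := by
  simp [aP, Finsupp.lift_apply, Finsupp.sum_single_index]

lemma aM_single (m : ℕ) : aM (Finsupp.single m 1) = (1 - q ^ m) • Finsupp.single (m-1) (1:Fq) := by
  simp [aM, Finsupp.lift_apply, Finsupp.sum_single_index]

lemma kO_single (m : ℕ) : kO (Finsupp.single m 1) = q ^ m • Finsupp.single m (1:Fq) := by
  simp only [kO, Finsupp.lift_apply]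
  rw [Finsupp.sum_single_index (by simp), one_smul]

lemma aP_pow_single (k m : ℕ) : (aP ^ k) (Finsupp.single m 1) = Finsupp.single (m+k) (1:Fq) := by
  induction k generalizing m with
  | zero => simp
  | succ k ih =>
    rw [pow_succ', Module.End.mul_apply, ih, aP_single]
    rfl

lemma kO_pow_single (k m : ℕ) : (kO ^ k) (Finsupp.single m 1) = q ^ (m*k) • Finsupp.single m (1:Fq) := by
  induction k with
  | zero => simp
  | succ k ih =>
    rw [pow_succ, Module.End.mul_apply, kO_single, map_smul, ih, smul_smul, ← pow_add]
    ring_nf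

lemma aM_pow_single (k m : ℕ) :
    (aM ^ k) (Finsupp.single m 1) =
      (∏ r ∈ Finset.range k, (1 - q ^ (m - r))) • Finsupp.single (m-k) (1:Fq) := by
  induction k generalizing m with
  | zero => simp
  | succ k ih =>
    rw [pow_succ', Module.End.mul_apply, ih, map_smul, aM_single, smul_smul,
      Finset.prod_range_succ]
    congr 1

lemma aM_prod_eq_zero {k m : ℕ} (h : m < k) :
    (∏ r ∈ Finset.range k, (1 - q ^ (m - r))) = (0:Fq) := by
  apply Finset.prod_eq_zero (Finset.mem_range.mpr h)
  simp
/-- scalar action of `G^j_i` on `|m⟩`. -/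
def g (i j m : ℕ) : Fq :=
  poch (-q) q (i + j) * (∏ r ∈ Finset.range (i - j), (1 - q ^ (m - r))) *
    ∑ m' ∈ Finset.range (min i j + 1),
      (poch (q ^ (-(min i j : ℤ))) q m' * poch (-q ^ (-(min i j : ℤ))) q m' /
          (poch q q m' * poch (-q ^ (-((i : ℤ) + j))) q m')) *
        q ^ m' * q ^ ((m - (i - j)) * m')

lemma GopN_single (i j m : ℕ) :
    GopN i j (Finsupp.single m 1) = g i j m • Finsupp.single (m + j - i) (1:Fq) := by
  have hidx : m - (i - j) + (j - i) = m + j - i := by omega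
  rw [GopN]
  simp only [LinearMap.smul_apply, LinearMap.coe_sum, Finset.sum_apply,
    Module.End.mul_apply, aM_pow_single, map_smul, kO_pow_single, smul_smul,
    aP_pow_single, hidx]
  rw [← Finset.sum_smul, smul_smul]
  congr 1
  rw [g, Finset.mul_sum, mul_assoc, Finset.mul_sum, Finset.mul_sum]
  apply Finset.sum_congr rfl
  intro m' _
  ring

lemma g_eq_zero {i j m : ℕ} (h : j + m < i) : g i j m = 0 := by
  rw [g, aM_prod_eq_zero (by omega : m < i - j)]
  ring

lemma Gop_coe (a b : ℕ) : Gop (a : ℤ) (b : ℤ) = GopN a b := by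
  simp [Gop]
/-- sum of first components. -/
def S1 (L : List (ℕ × ℕ)) : ℕ := (L.map Prod.fst).sum
/-- sum of second components. -/
def S2 (L : List (ℕ × ℕ)) : ℕ := (L.map Prod.snd).sum
/-- resulting index after applying the chain of `G` operators to `|m⟩`. -/
def idx (L : List (ℕ × ℕ)) (m : ℕ) : ℕ := m + S2 L - S1 L
/-- the scalar obtained by applying the chain of `G` operators to `|m⟩`. -/
def sc : List (ℕ × ℕ) → ℕ → Fq
  | [], _ => 1
  | p :: L, m => g p.1 p.2 (idx L m) * sc L m

@[simp] lemma S1_nil : S1 [] = 0 := rfl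
@[simp] lemma S2_nil : S2 [] = 0 := rfl
@[simp] lemma S1_cons (p : ℕ × ℕ) (L : List (ℕ × ℕ)) : S1 (p :: L) = p.1 + S1 L := by
  simp [S1]
@[simp] lemma S2_cons (p : ℕ × ℕ) (L : List (ℕ × ℕ)) : S2 (p :: L) = p.2 + S2 L := by
  simp [S2]
@[simp] lemma S1_append (L M : List (ℕ × ℕ)) : S1 (L ++ M) = S1 L + S1 M := by
  simp [S1]
@[simp] lemma S2_append (L M : List (ℕ × ℕ)) : S2 (L ++ M) = S2 L + S2 M := by
  simp [S2]

lemma sc_ne_zero_le (L : List (ℕ × ℕ)) (m : ℕ) (h : sc L m ≠ 0) : S1 L ≤ m + S2 L := by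
  induction L with
  | nil => simp
  | cons p L ih =>
    rw [sc] at h
    have h1 : g p.1 p.2 (idx L m) ≠ 0 := fun hz => h (by rw [hz, zero_mul])
    have h2 : sc L m ≠ 0 := fun hz => h (by rw [hz, mul_zero])
    have h3 := ih h2
    have h4 : ¬ (p.2 + idx L m < p.1) := fun hlt => h1 (g_eq_zero hlt)
    simp only [S1_cons, S2_cons]
    simp only [idx] at h4
    omega

lemma prod_single (L : List (ℕ × ℕ)) (m : ℕ) :
    ((L.map fun p => GopN p.1 p.2).prod) (Finsupp.single m 1) =
      sc L m • Finsupp.single (idx L m) (1:Fq) := by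
  induction L with
  | nil => simp [sc, idx]
  | cons p L ih =>
    rw [List.map_cons, List.prod_cons, Module.End.mul_apply, ih, map_smul, GopN_single, sc,
      smul_smul]
    by_cases hz : sc L m = 0
    · simp [hz]
    by_cases hg : g p.1 p.2 (idx L m) = 0
    · simp [hg]
    have h3 := sc_ne_zero_le L m hz
    have h4 : ¬ (p.2 + idx L m < p.1) := fun hlt => hg (g_eq_zero hlt)
    have hidx : idx L m + p.2 - p.1 = idx (p :: L) m := by
      simp only [idx, S1_cons, S2_cons] at *
      omega
    rw [hidx, mul_comm]

lemma sc_append (L : List (ℕ × ℕ)) (p : ℕ × ℕ) (m : ℕ) :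
    sc (L ++ [p]) m = sc L (m + p.2 - p.1) * g p.1 p.2 m := by
  induction L generalizing m with
  | nil => simp [sc, idx, mul_comm]
  | cons r L ih =>
    rw [List.cons_append, sc, ih, sc]
    by_cases hp : g p.1 p.2 m = 0
    · rw [hp]; ring
    by_cases hsc : sc L (m + p.2 - p.1) = 0
    · rw [hsc]; ring
    have h1 : ¬ (p.2 + m < p.1) := fun hlt => hp (g_eq_zero hlt)
    have h2 := sc_ne_zero_le L (m + p.2 - p.1) hsc
    have h3 : idx (L ++ [p]) m = idx L (m + p.2 - p.1) := by
      simp only [idx, S1_append, S2_append, S1_cons, S2_cons, S1_nil, S2_nil] at *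
      omega
    rw [h3]; ring

/-- F1 : rotation identity for the scalar chains. -/
lemma sc_rotate (p : ℕ × ℕ) (L : List (ℕ × ℕ)) (hbal : p.1 + S1 L = p.2 + S2 L)
    (m m' : ℕ) (hm : m' + p.2 = m + p.1) :
    sc (p :: L) m = sc (L ++ [p]) m' := by
  rw [sc_append]
  have hm2 : m' + p.2 - p.1 = m := by omega
  rw [hm2, sc]
  by_cases hz : sc L m = 0
  · rw [hz]; ring
  have h1 := sc_ne_zero_le L m hz
  have h2 : idx L m = m' := by simp only [idx]; omega
  rw [h2]; ring

/-- F3 : vanishing of the rotated chain at low degree. -/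
lemma sc_rot_eq_zero (p : ℕ × ℕ) (L : List (ℕ × ℕ)) (m' : ℕ) (h : m' + p.2 < p.1) :
    sc (L ++ [p]) m' = 0 := by
  rw [sc_append, g_eq_zero (by omega), mul_zero]

/-- F2' : vanishing of the original chain at low degree. -/
lemma sc_orig_eq_zero (p : ℕ × ℕ) (L : List (ℕ × ℕ)) (hbal : p.1 + S1 L = p.2 + S2 L)
    (m : ℕ) (h : m + p.1 < p.2) : sc (p :: L) m = 0 := by
  rw [sc]
  by_cases hz : sc L m = 0
  · rw [hz, mul_zero]
  exact absurd (sc_ne_zero_le L m hz) (by omega)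
lemma nxt_val {n : ℕ} (i : Fin n) : (nxt i).val = if i.val = n - 1 then 0 else i.val + 1 := by
  have hi := i.isLt
  simp only [nxt]
  split_ifs with h
  · rw [h, Nat.sub_add_cancel (by omega), Nat.mod_self]
  · exact Nat.mod_eq_of_lt (by omega)

lemma nxt_bijective {n : ℕ} : Function.Bijective (nxt : Fin n → Fin n) := by
  rw [Fintype.bijective_iff_injective_and_card]
  refine ⟨fun a b h => ?_, rfl⟩
  have ha := a.isLt
  have hb := b.isLt
  have h' := congrArg Fin.val h
  rw [nxt_val, nxt_val] at h'
  apply Fin.ext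
  split_ifs at h' <;> omega

lemma sum_comp_nxt {n : ℕ} {M : Type*} [AddCommMonoid M] (f : Fin n → M) :
    ∑ i, f (nxt i) = ∑ i, f i :=
  Function.Bijective.sum_comp nxt_bijective f

lemma innN_cyc {n : ℕ} (hn : 0 < n) (γ α : Fin n → ℕ) :
    innN (cyc γ) (cyc α) + γ ⟨0, hn⟩ * (∑ i, α i) = innN γ α + α ⟨0, hn⟩ * (∑ i, γ i) := by
  set lst : Fin n := ⟨n - 1, by omega⟩ with hlst
  have hnxtlst : nxt lst = ⟨0, hn⟩ := by
    apply Fin.ext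
    rw [nxt_val]
    simp [hlst]
  have hcyc : ∀ (a : Fin n → ℕ) (i : Fin n), cyc a i = a (nxt i) := fun a i => rfl
  have point : ∀ i j : Fin n,
      ((if i < j then γ (nxt i) * α (nxt j) else 0) +
        (if i = lst then γ (nxt i) * α (nxt j) else 0)) =
      ((if nxt i < nxt j then γ (nxt i) * α (nxt j) else 0) +
        (if j = lst then γ (nxt i) * α (nxt j) else 0)) := by
    intro i j
    have hi := i.isLt
    have hj := j.isLt
    simp only [Fin.lt_def, Fin.ext_iff, nxt_val, hlst]
    split_ifs <;> omega
  have lhs2 : ∑ i : Fin n, ∑ j : Fin n, (if i = lst then γ (nxt i) * α (nxt j) else 0)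
      = γ ⟨0, hn⟩ * ∑ j, α j := by
    have : ∀ i : Fin n, ∑ j : Fin n, (if i = lst then γ (nxt i) * α (nxt j) else 0)
        = if i = lst then γ (nxt i) * ∑ j, α (nxt j) else 0 := by
      intro i; split_ifs with h <;> simp [Finset.mul_sum]
    rw [Finset.sum_congr rfl fun i _ => this i, Finset.sum_ite_eq' Finset.univ lst, if_pos
      (Finset.mem_univ _), hnxtlst, sum_comp_nxt]
  have rhs2 : ∑ i : Fin n, ∑ j : Fin n, (if j = lst then γ (nxt i) * α (nxt j) else 0)
      = α ⟨0, hn⟩ * ∑ i, γ i := by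
    have : ∀ i : Fin n, ∑ j : Fin n, (if j = lst then γ (nxt i) * α (nxt j) else 0)
        = γ (nxt i) * α ⟨0, hn⟩ := by
      intro i
      rw [Finset.sum_ite_eq' Finset.univ lst, if_pos (Finset.mem_univ _), hnxtlst]
    rw [Finset.sum_congr rfl fun i _ => this i, ← Finset.sum_mul, sum_comp_nxt, mul_comm]
  have rhs1 : ∑ i : Fin n, ∑ j : Fin n, (if nxt i < nxt j then γ (nxt i) * α (nxt j) else 0)
      = innN γ α := by
    rw [innN]
    rw [← sum_comp_nxt (fun i => ∑ j, if i < j then γ i * α j else 0)]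
    apply Finset.sum_congr rfl
    intro i _
    exact sum_comp_nxt (fun j => if nxt i < j then γ (nxt i) * α j else 0)
  have expand : innN (cyc γ) (cyc α)
      = ∑ i : Fin n, ∑ j : Fin n, (if i < j then γ (nxt i) * α (nxt j) else 0) := rfl
  calc innN (cyc γ) (cyc α) + γ ⟨0, hn⟩ * (∑ i, α i)
      = ∑ i : Fin n, ∑ j : Fin n, ((if i < j then γ (nxt i) * α (nxt j) else 0) +
          (if i = lst then γ (nxt i) * α (nxt j) else 0)) := by
        rw [expand, ← lhs2, ← Finset.sum_add_distrib]
        apply Finset.sum_congr rfl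
        intro i _
        rw [← Finset.sum_add_distrib]
    _ = ∑ i : Fin n, ∑ j : Fin n, ((if nxt i < nxt j then γ (nxt i) * α (nxt j) else 0) +
          (if j = lst then γ (nxt i) * α (nxt j) else 0)) := by
        apply Finset.sum_congr rfl; intro i _
        apply Finset.sum_congr rfl; intro j _
        exact point i j
    _ = innN γ α + α ⟨0, hn⟩ * (∑ i, γ i) := by
        rw [← rhs1, ← rhs2, ← Finset.sum_add_distrib]
        apply Finset.sum_congr rfl
        intro i _
        rw [← Finset.sum_add_distrib]
lemma T_inv_zpow (e : ℤ) : (T⁻¹) ^ e = HahnSeries.single (-e) (1 : Fq) := by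
  rw [T, inv_zpow, ← RatFunc.single_zpow, HahnSeries.inv_single e (1:Fq), inv_one]

lemma ofPS_coeff (x : PowerSeries Fq) (k : ℤ) :
    (HahnSeries.ofPowerSeries ℤ Fq x).coeff k
      = if 0 ≤ k then PowerSeries.coeff k.toNat x else 0 := by
  split_ifs with h
  · conv_lhs => rw [← Int.toNat_of_nonneg h]
    exact HahnSeries.ofPowerSeries_apply_coeff x k.toNat
  · rw [HahnSeries.ofPowerSeries_apply, HahnSeries.embDomain_notin_range]
    intro hc
    rw [Set.mem_range] at hc
    obtain ⟨m, hm⟩ := hc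
    have hm' : (m : ℤ) = k := hm
    omega

lemma single_mul_coeff (d : ℤ) (x : LS) (k : ℤ) :
    (HahnSeries.single d (1:Fq) * x).coeff k = x.coeff (k - d) := by
  have : k = (k - d) + d := by ring
  rw [this, HahnSeries.coeff_single_mul_add, one_mul]
  ring_nf

lemma q_ne_zero : (q : Fq) ≠ 0 := RatFunc.X_ne_zero
/-- `K(z)^γ_α = z^{α₁-γ₁} K(z)^{σ(γ)}_{σ(α)}` where `z = t⁻¹` and `σ` is the
cyclic shift. -/
theorem statement4 (n l : ℕ) (hn : 2 ≤ n) (α γ : Fin n → ℕ)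
    (hα : ∑ i, α i = l) (hγ : ∑ i, γ i = l) :
    Kmat n l α γ =
      T⁻¹ ^ ((α ⟨0, by omega⟩ : ℤ) - (γ ⟨0, by omega⟩ : ℤ)) * Kmat n l (cyc α) (cyc γ) := by
  obtain ⟨n', rfl⟩ : ∃ m, n = m + 1 := ⟨n - 1, by omega⟩
  have h0 : 0 < n' + 1 := Nat.succ_pos n'
  set z0 : Fin (n' + 1) := ⟨0, h0⟩ with hz0
  have hcα : ∑ i, cyc α i = l := by
    rw [show (∑ i, cyc α i) = ∑ i, α (nxt i) from rfl, sum_comp_nxt]; exact hα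
  have hcγ : ∑ i, cyc γ i = l := by
    rw [show (∑ i, cyc γ i) = ∑ i, γ (nxt i) from rfl, sum_comp_nxt]; exact hγ
  set p : ℕ × ℕ := (α z0, γ z0) with hp
  set L' : List (ℕ × ℕ) := List.ofFn (fun i : Fin n' => (α i.succ, γ i.succ)) with hL'
  have hL : List.ofFn (fun i : Fin (n' + 1) => (α i, γ i)) = p :: L' := by
    rw [List.ofFn_succ]
    congr 1
  have hnxt_cast : ∀ i : Fin n', nxt (Fin.castSucc i) = Fin.succ i := by
    intro i
    have hi := i.isLt
    apply Fin.ext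
    rw [nxt_val, if_neg (by simp only [Fin.coe_castSucc]; omega)]
    simp
  have hnxt_last : nxt (Fin.last n') = z0 := by
    apply Fin.ext
    rw [nxt_val, if_pos (by simp)]
  have hLrot : List.ofFn (fun i : Fin (n' + 1) => (cyc α i, cyc γ i)) = L' ++ [p] := by
    rw [List.ofFn_succ', List.concat_eq_append]
    congr 1
    · apply congrArg List.ofFn
      funext i
      show (α (nxt (Fin.castSucc i)), γ (nxt (Fin.castSucc i))) = _
      rw [hnxt_cast i]
    · show [(α (nxt (Fin.last n')), γ (nxt (Fin.last n')))] = [p]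
      rw [hnxt_last, hp]
  have hS1L : S1 (p :: L') = l := by
    rw [← hL, S1, List.map_ofFn, List.sum_ofFn, ← hα]
    rfl
  have hS2L : S2 (p :: L') = l := by
    rw [← hL, S2, List.map_ofFn, List.sum_ofFn, ← hγ]
    rfl
  have hbal : p.1 + S1 L' = p.2 + S2 L' := by
    rw [S1_cons] at hS1L; rw [S2_cons] at hS2L; omega
  -- diagonal elements of products of G operators
  have elem_eq : ∀ (a c : Fin (n' + 1) → ℕ), (∑ i, a i = l) → (∑ i, c i = l) → ∀ m : ℕ,
      elem ((List.ofFn fun i => Gop (a i) (c i)).prod) m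
        = sc (List.ofFn fun i => (a i, c i)) m := by
    intro a c ha hc m
    have h1 : (List.ofFn fun i => Gop (a i) (c i))
        = (List.ofFn fun i : Fin (n' + 1) => (a i, c i)).map (fun p => GopN p.1 p.2) := by
      rw [List.map_ofFn]
      exact congrArg List.ofFn (funext fun i => (Gop_coe (a i) (c i)).symm)
    have hS1 : S1 (List.ofFn fun i : Fin (n' + 1) => (a i, c i)) = l := by
      rw [S1, List.map_ofFn, List.sum_ofFn, ← ha]; rfl
    have hS2 : S2 (List.ofFn fun i : Fin (n' + 1) => (a i, c i)) = l := by
      rw [S2, List.map_ofFn, List.sum_ofFn, ← hc]; rfl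
    have hidx : idx (List.ofFn fun i : Fin (n' + 1) => (a i, c i)) m = m := by
      rw [idx, hS1, hS2]; omega
    rw [elem, h1, prod_single, hidx, Finsupp.smul_apply, Finsupp.single_eq_same, smul_eq_mul,
      mul_one]
  -- expansion of Kmat
  have expand : ∀ (a c : Fin (n' + 1) → ℕ), (∑ i, a i = l) → (∑ i, c i = l) →
      Kmat (n' + 1) l a c =
        HahnSeries.C (q ^ innN c a) *
          HahnSeries.ofPowerSeries ℤ Fq (PowerSeries.mk fun m =>
            q ^ (-(l * m : ℤ)) * sc (List.ofFn fun i => (a i, c i)) m) *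
        (HahnSeries.ofPowerSeries ℤ Fq
            (poch (PowerSeries.C (R := Fq) (q ^ (-(l : ℤ))) * PowerSeries.X) (PowerSeries.C (R := Fq) q)
              (l + 1)) *
          HahnSeries.ofPowerSeries ℤ Fq
            ((PowerSeries.C (R := Fq) (poch (q ^ 2) (q ^ 2) l) *
                poch (PowerSeries.C (R := Fq) (-q) * PowerSeries.X) (PowerSeries.C (R := Fq) q) l)⁻¹)) := by
    intro a c ha hc
    rw [Kmat, KmatPS]
    have hmk : (PowerSeries.mk fun m => (RingHom.id Fq)
          (q ^ (-(l * m : ℤ)) * elem (List.ofFn fun i => Gop (a i) (c i)).prod m))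
        = PowerSeries.mk fun m =>
            q ^ (-(l * m : ℤ)) * sc (List.ofFn fun i => (a i, c i)) m := by
      apply congrArg PowerSeries.mk
      funext m
      rw [RingHom.id_apply, elem_eq a c ha hc m]
    rw [hmk, map_mul, map_mul, map_mul]
    simp only [RingHom.id_apply, HahnSeries.ofPowerSeries_C]
    ring
  rw [expand α γ hα hγ, expand (cyc α) (cyc γ) hcα hcγ, hL, hLrot, T_inv_zpow]
  have hinn := innN_cyc h0 γ α
  rw [hα, hγ] at hinn
  have core : HahnSeries.C (q ^ innN γ α) *
        HahnSeries.ofPowerSeries ℤ Fq (PowerSeries.mk fun m =>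
          q ^ (-(l * m : ℤ)) * sc (p :: L') m)
      = HahnSeries.single (-((α z0 : ℤ) - (γ z0 : ℤ))) 1 *
        (HahnSeries.C (q ^ innN (cyc γ) (cyc α)) *
          HahnSeries.ofPowerSeries ℤ Fq (PowerSeries.mk fun m =>
            q ^ (-(l * m : ℤ)) * sc (L' ++ [p]) m)) := by
    ext k
    rw [HahnSeries.C_apply, HahnSeries.C_apply, single_mul_coeff, HahnSeries.coeff_single_zero_mul,
      HahnSeries.coeff_single_zero_mul, ofPS_coeff, ofPS_coeff, PowerSeries.coeff_mk, PowerSeries.coeff_mk,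
      sub_neg_eq_add]
    have hp1 : p.1 = α z0 := by rw [hp]
    have hp2 : p.2 = γ z0 := by rw [hp]
    rcases le_or_gt 0 k with hk | hk <;>
      rcases le_or_gt 0 (k + ((α z0 : ℤ) - (γ z0 : ℤ))) with hke | hke
    · rw [if_pos hk, if_pos hke]
      have hs := sc_rotate p L' hbal k.toNat (k + ((α z0 : ℤ) - (γ z0 : ℤ))).toNat
        (by rw [hp1, hp2]; omega)
      rw [hs, ← zpow_natCast q (innN γ α), ← zpow_natCast q (innN (cyc γ) (cyc α)),
        ← mul_assoc, ← mul_assoc, ← zpow_add₀ q_ne_zero, ← zpow_add₀ q_ne_zero]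
      congr 2
      have h1 : (k.toNat : ℤ) = k := by omega
      have h2 : (((k + ((α z0 : ℤ) - (γ z0 : ℤ))).toNat : ℤ)) = k + ((α z0 : ℤ) - (γ z0 : ℤ)) := by
        omega
      have hinnZ : ((innN (cyc γ) (cyc α) : ℤ)) + (γ z0 : ℤ) * l = (innN γ α : ℤ) + (α z0 : ℤ) * l := by
        exact_mod_cast hinn
      linear_combination (-1 : ℤ) * hinnZ + (l : ℤ) * h2 - (l : ℤ) * h1
    · rw [if_pos hk, if_neg (by omega)]
      rw [sc_orig_eq_zero p L' hbal k.toNat (by rw [hp1, hp2]; omega)]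
      ring
    · rw [if_neg (by omega), if_pos hke]
      rw [sc_rot_eq_zero p L' (k + ((α z0 : ℤ) - (γ z0 : ℤ))).toNat (by rw [hp1, hp2]; omega)]
      ring
    · rw [if_neg (by omega), if_neg (by omega)]
      ring
  rw [core, mul_assoc]
end KOY
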